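/- Equation (8) (derivative of the quadratic loss in the garrote parameter). Let A be a bounded linear operator on H and g ∈ H. For c ∈ H, i ∈ Fin d and ξ ∈ (0,1)^d, the real function t ↦ ½⟨S_{ξ[i↦t]} c, A(S_{ξ[i↦t]} c)⟩ − ⟨g, S_{ξ[i↦t]} c⟩, where ξ[i↦t] ∈ (0,1)^d is ξ with its i-th coordinate replaced by t ∈ (0,1), is differentiable at t = ξ i with derivative ½⟨D_i(ξ)c, A(S_ξ c)⟩ + ½⟨S_ξ c, A(D_i(ξ)c)⟩ − ⟨g, D_i(ξ)c⟩. -/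

import Mathlib

open MeasureTheory Filter Topology

noncomputable section

/-- Factorial `α!` of a multi-index `α : Fin d → ℕ`. -/
def mfact {d : ℕ} (α : Fin d → ℕ) : ℝ := ∏ i, (Nat.factorial (α i) : ℝ)

/-- Membership in the native space `H` of the power series kernel with weights `w`:
the coefficients vanish where the weights do, and the weighted square sum is finite. -/
def memH {d : ℕ} (w : (Fin d → ℕ) → ℝ) (c : (Fin d → ℕ) → ℝ) : Prop :=
  (∀ α, w α = 0 → c α = 0) ∧
    Summable (fun α : Fin d → ℕ => mfact α ^ 2 * c α ^ 2 / w α)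

/-- Inner product `⟨c, c'⟩` on the native space (terms with `w α = 0` vanish since
division by zero is zero). -/
def innerH {d : ℕ} (w : (Fin d → ℕ) → ℝ) (c c' : (Fin d → ℕ) → ℝ) : ℝ :=
  ∑' α : Fin d → ℕ, mfact α ^ 2 * c α * c' α / w α

/-- Norm on the native space. -/
def normH {d : ℕ} (w : (Fin d → ℕ) → ℝ) (c : (Fin d → ℕ) → ℝ) : ℝ :=
  Real.sqrt (innerH w c c)

/-- The scaling operator `S_ξ`, `(S_ξ c) α = ξ^α · c α`. -/
def Sscale {d : ℕ} (ξ : Fin d → ℝ) (c : (Fin d → ℕ) → ℝ) : (Fin d → ℕ) → ℝ :=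
  fun α => (∏ i, ξ i ^ α i) * c α

/-- The scaling-derivative sequence `D_i(ξ) c`,
`(D_i(ξ)c) α = (α i)·(ξ i)^(α i − 1)·(∏_{j≠i} (ξ j)^(α j))·(c α)`
(the factor is `0` when `α i = 0`, as enforced by the factor `(α i : ℝ)`). -/
def Dscale {d : ℕ} (i : Fin d) (ξ : Fin d → ℝ) (c : (Fin d → ℕ) → ℝ) : (Fin d → ℕ) → ℝ :=
  fun α => (α i : ℝ) * ξ i ^ (α i - 1) * (∏ j ∈ Finset.univ.erase i, ξ j ^ α j) * c α

/-- A bounded linear operator on the native space: maps `H` to `H`, is linear on `H`,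
and is bounded on `H`. -/
def IsBoundedOpH {d : ℕ} (w : (Fin d → ℕ) → ℝ)
    (A : ((Fin d → ℕ) → ℝ) → ((Fin d → ℕ) → ℝ)) : Prop :=
  (∀ c, memH w c → memH w (A c)) ∧
  (∀ (a : ℝ) (c c' : (Fin d → ℕ) → ℝ), memH w c → memH w c' →
      A (a • c + c') = a • A c + A c') ∧
  (∃ M : ℝ, 0 ≤ M ∧ ∀ c, memH w c → normH w (A c) ≤ M * normH w c)

/-- Operator norm on the native space: the least bound constant. -/
def opNormH {d : ℕ} (w : (Fin d → ℕ) → ℝ)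
    (A : ((Fin d → ℕ) → ℝ) → ((Fin d → ℕ) → ℝ)) : ℝ :=
  sInf {M : ℝ | 0 ≤ M ∧ ∀ c, memH w c → normH w (A c) ≤ M * normH w c}

/-- The quadratic loss `Q_{A,g}(ξ; c) = ½⟨S_ξ c, A (S_ξ c)⟩ − ⟨g, S_ξ c⟩`. -/
def quadLoss {d : ℕ} (w : (Fin d → ℕ) → ℝ)
    (A : ((Fin d → ℕ) → ℝ) → ((Fin d → ℕ) → ℝ)) (g : (Fin d → ℕ) → ℝ)
    (ξ : Fin d → ℝ) (c : (Fin d → ℕ) → ℝ) : ℝ :=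
  (1/2) * innerH w (Sscale ξ c) (A (Sscale ξ c)) - innerH w g (Sscale ξ c)

/-- The ξ_i-derivative of the quadratic loss:
`½⟨D_i(ξ)c, A(S_ξ c)⟩ + ½⟨S_ξ c, A(D_i(ξ)c)⟩ − ⟨g, D_i(ξ)c⟩`. -/
def quadLossDeriv {d : ℕ} (w : (Fin d → ℕ) → ℝ)
    (A : ((Fin d → ℕ) → ℝ) → ((Fin d → ℕ) → ℝ)) (g : (Fin d → ℕ) → ℝ)
    (i : Fin d) (ξ : Fin d → ℝ) (c : (Fin d → ℕ) → ℝ) : ℝ :=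
  (1/2) * innerH w (Dscale i ξ c) (A (Sscale ξ c))
    + (1/2) * innerH w (Sscale ξ c) (A (Dscale i ξ c))
    - innerH w g (Dscale i ξ c)

/-- The function represented by a coefficient sequence: `f_c(x) = ∑_α (c α)·x^α`. -/
def evalF {d : ℕ} (c : (Fin d → ℕ) → ℝ) (x : Fin d → ℝ) : ℝ :=
  ∑' α : Fin d → ℕ, c α * ∏ i, x i ^ α i

/-- Sup norm of the represented function on a set `Z`. -/
def supNormOn {d : ℕ} (Z : Set (Fin d → ℝ)) (c : (Fin d → ℕ) → ℝ) : ℝ :=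
  ⨆ z : Z, |evalF c (z : Fin d → ℝ)|

section GarroteAux

open Finset

lemma mfact_pos {d : ℕ} (α : Fin d → ℕ) : 0 < mfact α :=
  Finset.prod_pos fun i _ => by exact_mod_cast Nat.factorial_pos (α i)

lemma pow_bound1 {ρ : ℝ} (h0 : 0 ≤ ρ) (h1 : ρ < 1) (n : ℕ) :
    (n : ℝ) * ρ ^ (n - 1) ≤ (1 - ρ)⁻¹ := by
  have hsum : Summable fun j : ℕ => ρ ^ j := summable_geometric_of_lt_one h0 h1
  calc (n:ℝ) * ρ ^ (n-1) = ∑ _j ∈ Finset.range n, ρ ^ (n-1) := by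
        rw [Finset.sum_const, Finset.card_range, nsmul_eq_mul]
    _ ≤ ∑ j ∈ Finset.range n, ρ ^ j := by
        refine Finset.sum_le_sum fun j hj => ?_
        rw [Finset.mem_range] at hj
        exact pow_le_pow_of_le_one h0 h1.le (by omega)
    _ ≤ ∑' j : ℕ, ρ ^ j := Summable.sum_le_tsum _ (fun j _ => pow_nonneg h0 j) hsum
    _ = (1 - ρ)⁻¹ := tsum_geometric_of_lt_one h0 h1

/-- Constant bounding `n^2 * ρ^(n-2)` uniformly in `n`. -/
def C2 (ρ : ℝ) : ℝ := ((Real.sqrt ρ)⁻¹ * (1 - Real.sqrt ρ)⁻¹) ^ 2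

lemma C2_nonneg (ρ : ℝ) : 0 ≤ C2 ρ := sq_nonneg _

lemma sq_pow_bound {ρ : ℝ} (h0 : 0 < ρ) (h1 : ρ < 1) (n : ℕ) :
    (n:ℝ)^2 * ρ ^ (n-2) ≤ C2 ρ := by
  set σ := Real.sqrt ρ with hσdef
  have hσ0 : 0 < σ := Real.sqrt_pos.2 h0
  have hσ1 : σ < 1 := by
    have := Real.sqrt_lt_sqrt h0.le h1
    simpa using this
  have hρ : ρ = σ ^ 2 := (Real.sq_sqrt h0.le).symm
  have h2 : σ ^ (n-2) ≤ σ⁻¹ * σ ^ (n-1) := by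
    rw [← div_eq_inv_mul, le_div_iff₀ hσ0, ← pow_succ]
    exact pow_le_pow_of_le_one hσ0.le hσ1.le (by omega)
  have key : (n:ℝ) * σ ^ (n-2) ≤ σ⁻¹ * (1 - σ)⁻¹ := by
    calc (n:ℝ) * σ ^ (n-2) ≤ (n:ℝ) * (σ⁻¹ * σ ^ (n-1)) := by
          exact mul_le_mul_of_nonneg_left h2 (Nat.cast_nonneg n)
      _ = σ⁻¹ * ((n:ℝ) * σ ^ (n-1)) := by ring
      _ ≤ σ⁻¹ * (1 - σ)⁻¹ :=
          mul_le_mul_of_nonneg_left (pow_bound1 hσ0.le hσ1 n) (inv_nonneg.2 hσ0.le)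
  calc (n:ℝ)^2 * ρ ^ (n-2) = ((n:ℝ) * σ ^ (n-2))^2 := by
        rw [hρ, ← pow_mul, mul_pow, ← pow_mul, Nat.mul_comm]
    _ ≤ (σ⁻¹ * (1 - σ)⁻¹)^2 := by
        apply pow_le_pow_left₀ (by positivity) key
    _ = C2 ρ := rfl

lemma key_poly_bound {ρ t s : ℝ} (hρ0 : 0 < ρ) (hρ1 : ρ < 1)
    (ht0 : 0 ≤ t) (htρ : t ≤ ρ) (hs0 : 0 ≤ s) (hsρ : s ≤ ρ) (n : ℕ) :
    |t ^ n - s ^ n - (t - s) * ((n:ℝ) * s ^ (n - 1))| ≤ (t - s) ^ 2 * C2 ρ := by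
  have hgeom : t ^ n - s ^ n = (∑ j ∈ range n, t ^ j * s ^ (n - 1 - j)) * (t - s) :=
    (geom_sum₂_mul t s n).symm
  have hns : (n:ℝ) * s ^ (n-1) = ∑ _j ∈ range n, s ^ (n-1) := by
    rw [Finset.sum_const, Finset.card_range, nsmul_eq_mul]
  have hsplit : t ^ n - s ^ n - (t - s) * ((n:ℝ) * s^(n-1))
      = (t - s) * ∑ j ∈ range n, (t ^ j * s ^ (n-1-j) - s ^ (n-1)) := by
    rw [hgeom, hns, Finset.sum_sub_distrib]; ring
  have hterm : ∀ j ∈ range n, |t ^ j * s ^ (n-1-j) - s ^ (n-1)|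
      ≤ |t - s| * ((n:ℝ) * ρ ^ (n-2)) := by
    intro j hj
    rw [Finset.mem_range] at hj
    have e1 : t^j * s^(n-1-j) - s^(n-1) = s^(n-1-j) * (t^j - s^j) := by
      rw [mul_sub, ← pow_add, show n-1-j + j = n-1 by omega]; ring
    have e2 : s^(n-1-j) * (t^j - s^j)
        = (∑ k ∈ range j, t^k * s^(n-2-k)) * (t-s) := by
      rw [← geom_sum₂_mul t s j, ← mul_assoc, Finset.mul_sum]
      congr 1
      refine Finset.sum_congr rfl fun k hk => ?_
      rw [Finset.mem_range] at hk
      calc s^(n-1-j) * (t^k * s^(j-1-k)) = t^k * s^(n-1-j + (j-1-k)) := by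
            rw [pow_add]; ring
        _ = t^k * s^(n-2-k) := by rw [show n-1-j + (j-1-k) = n-2-k by omega]
    rw [e1, e2, abs_mul]
    rw [mul_comm (|t-s|)]
    refine mul_le_mul_of_nonneg_right ?_ (abs_nonneg _)
    refine (Finset.abs_sum_le_sum_abs _ _).trans ?_
    have hone : ∀ k ∈ range j, |t^k * s^(n-2-k)| ≤ ρ^(n-2) := by
      intro k hk
      rw [Finset.mem_range] at hk
      rw [abs_mul, abs_pow, abs_pow, abs_of_nonneg ht0, abs_of_nonneg hs0]
      calc t^k * s^(n-2-k) ≤ ρ^k * ρ^(n-2-k) :=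
            mul_le_mul (pow_le_pow_left₀ ht0 htρ k) (pow_le_pow_left₀ hs0 hsρ _)
              (pow_nonneg hs0 _) (pow_nonneg (ht0.trans htρ) _)
        _ = ρ^(n-2) := by rw [← pow_add, show k + (n-2-k) = n-2 by omega]
    refine (Finset.sum_le_sum hone).trans ?_
    rw [Finset.sum_const, Finset.card_range, nsmul_eq_mul]
    have hjn : (j:ℝ) ≤ (n:ℝ) := by exact_mod_cast hj.le
    exact mul_le_mul_of_nonneg_right hjn (pow_nonneg hρ0.le _)
  calc |t ^ n - s ^ n - (t - s) * ((n:ℝ) * s ^ (n - 1))|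
      = |t - s| * |∑ j ∈ range n, (t ^ j * s ^ (n-1-j) - s ^ (n-1))| := by
        rw [hsplit, abs_mul]
    _ ≤ |t - s| * ∑ j ∈ range n, |t ^ j * s ^ (n-1-j) - s ^ (n-1)| :=
        mul_le_mul_of_nonneg_left (Finset.abs_sum_le_sum_abs _ _) (abs_nonneg _)
    _ ≤ |t - s| * ∑ _j ∈ range n, |t - s| * ((n:ℝ) * ρ ^ (n-2)) :=
        mul_le_mul_of_nonneg_left (Finset.sum_le_sum hterm) (abs_nonneg _)
    _ = (t-s)^2 * ((n:ℝ)^2 * ρ^(n-2)) := by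
        rw [Finset.sum_const, Finset.card_range, nsmul_eq_mul, ← sq_abs (t-s)]; ring
    _ ≤ (t-s)^2 * C2 ρ :=
        mul_le_mul_of_nonneg_left (sq_pow_bound hρ0 hρ1 n) (sq_nonneg _)

end GarroteAux

section LpAux

open Finset
open scoped ENNReal

variable {d : ℕ}

/-- The ambient `ℓ²` space indexed by multi-indices. -/
abbrev lpH (d : ℕ) := lp (fun _ : Fin d → ℕ => ℝ) 2

/-- Isometric coordinates of a native-space element inside `ℓ²`. -/
def phiH (w : (Fin d → ℕ) → ℝ) (c : (Fin d → ℕ) → ℝ) : (Fin d → ℕ) → ℝ :=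
  fun α => mfact α * c α / Real.sqrt (w α)

lemma phiH_mul (w : (Fin d → ℕ) → ℝ) (hw : ∀ α, 0 ≤ w α) (c c' : (Fin d → ℕ) → ℝ)
    (α : Fin d → ℕ) :
    phiH w c α * phiH w c' α = mfact α ^ 2 * c α * c' α / w α := by
  rcases eq_or_lt_of_le (hw α) with h | h
  · simp [phiH, ← h]
  · simp only [phiH]
    rw [div_mul_div_comm, Real.mul_self_sqrt h.le]
    ring

lemma phiH_sq (w : (Fin d → ℕ) → ℝ) (hw : ∀ α, 0 ≤ w α) (c : (Fin d → ℕ) → ℝ)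
    (α : Fin d → ℕ) :
    phiH w c α ^ 2 = mfact α ^ 2 * c α ^ 2 / w α := by
  rw [sq, phiH_mul w hw c c α]; ring

lemma memℓp_phiH {w : (Fin d → ℕ) → ℝ} (hw : ∀ α, 0 ≤ w α) {c : (Fin d → ℕ) → ℝ}
    (hc : memH w c) : Memℓp (phiH w c) 2 := by
  apply memℓp_gen
  have he : (fun α => ‖phiH w c α‖ ^ (2:ℝ≥0∞).toReal)
      = fun α : Fin d → ℕ => mfact α ^ 2 * c α ^ 2 / w α := by
    funext α
    rw [show ((2:ℝ≥0∞)).toReal = ((2:ℕ):ℝ) by norm_num, Real.rpow_natCast,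
      Real.norm_eq_abs, sq_abs, phiH_sq w hw]
  rw [he]
  exact hc.2

/-- The element of `ℓ²` corresponding to a native-space member. -/
def toLpH (w : (Fin d → ℕ) → ℝ) (hw : ∀ α, 0 ≤ w α) {c : (Fin d → ℕ) → ℝ}
    (hc : memH w c) : lpH d := ⟨phiH w c, memℓp_phiH hw hc⟩

@[simp] lemma toLpH_apply (w : (Fin d → ℕ) → ℝ) (hw : ∀ α, 0 ≤ w α) {c : (Fin d → ℕ) → ℝ}
    (hc : memH w c) (α : Fin d → ℕ) : (toLpH w hw hc : (Fin d → ℕ) → ℝ) α = phiH w c α := rfl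

lemma toLpH_congr (w : (Fin d → ℕ) → ℝ) (hw : ∀ α, 0 ≤ w α) {c c' : (Fin d → ℕ) → ℝ}
    (hc : memH w c) (hc' : memH w c') (h : c = c') : toLpH w hw hc = toLpH w hw hc' := by
  subst h; rfl

lemma inner_real_eq (x y : ℝ) : @inner ℝ ℝ _ x y = x * y := by
  simp [RCLike.inner_apply, mul_comm]

lemma innerH_eq (w : (Fin d → ℕ) → ℝ) (hw : ∀ α, 0 ≤ w α) {a b : (Fin d → ℕ) → ℝ}
    (ha : memH w a) (hb : memH w b) :
    innerH w a b = @inner ℝ _ _ (toLpH w hw ha) (toLpH w hw hb) := by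
  rw [lp.inner_eq_tsum, innerH]
  refine tsum_congr fun α => ?_
  rw [inner_real_eq, toLpH_apply, toLpH_apply, phiH_mul w hw]

lemma summable_sq (z : lpH d) : Summable fun α => (z α)^2 := by
  have := (lp.memℓp z).summable (p := 2) (by norm_num)
  have he : (fun α : Fin d → ℕ => ‖z α‖ ^ (2:ℝ≥0∞).toReal) = fun α => (z α)^2 := by
    funext α
    rw [show ((2:ℝ≥0∞)).toReal = ((2:ℕ):ℝ) by norm_num, Real.rpow_natCast,
      Real.norm_eq_abs, sq_abs]
  rwa [he] at this

lemma norm_lpH_eq (z : lpH d) : ‖z‖ = Real.sqrt (∑' α, (z α)^2) := by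
  have h1 : @inner ℝ _ _ z z = ∑' α, (z α)^2 := by
    rw [lp.inner_eq_tsum]
    exact tsum_congr fun α => by rw [inner_real_eq, sq]
  rw [← Real.sqrt_sq (norm_nonneg z), ← real_inner_self_eq_norm_sq, h1]

lemma norm_lpH_le (z y : lpH d) (h : ∀ α, (z α)^2 ≤ (y α)^2) : ‖z‖ ≤ ‖y‖ := by
  rw [norm_lpH_eq, norm_lpH_eq]
  exact Real.sqrt_le_sqrt (Summable.tsum_le_tsum h (summable_sq z) (summable_sq y))

lemma normH_eq (w : (Fin d → ℕ) → ℝ) (hw : ∀ α, 0 ≤ w α) {c : (Fin d → ℕ) → ℝ}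
    (hc : memH w c) : normH w c = ‖toLpH w hw hc‖ := by
  rw [normH, innerH_eq w hw hc hc, real_inner_self_eq_norm_sq, Real.sqrt_sq (norm_nonneg _)]

lemma memH_zero (w : (Fin d → ℕ) → ℝ) : memH w 0 := by
  refine ⟨fun α _ => rfl, ?_⟩
  simpa using summable_zero

lemma memH_of_bound {w : (Fin d → ℕ) → ℝ} (hw : ∀ α, 0 ≤ w α) {c a : (Fin d → ℕ) → ℝ}
    (hc : memH w c) (K : ℝ) (h0 : ∀ α, w α = 0 → a α = 0)
    (hle : ∀ α, |a α| ≤ K * |c α|) : memH w a := by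
  refine ⟨h0, ?_⟩
  refine Summable.of_nonneg_of_le (fun α => ?_) (fun α => ?_) (hc.2.mul_left (K^2))
  · rcases eq_or_lt_of_le (hw α) with h | h
    · simp [← h]
    · positivity
  · rcases eq_or_lt_of_le (hw α) with h | h
    · simp [← h]
    · have ha2 : a α^2 ≤ K^2 * c α^2 := by
        have h1 : |a α|^2 ≤ (K*|c α|)^2 :=
          pow_le_pow_left₀ (abs_nonneg _) (hle α) 2
        rw [sq_abs, mul_pow, sq_abs] at h1
        exact h1
      rw [← mul_div_assoc]
      exact div_le_div_of_nonneg_right (by nlinarith [sq_nonneg (mfact α)]) (hw α)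

end LpAux

section OpAux

open Finset
open scoped ENNReal

variable {d : ℕ}

/-- Back from `ℓ²` coordinates to native-space coefficients. -/
def psiH (w : (Fin d → ℕ) → ℝ) (x : (Fin d → ℕ) → ℝ) : (Fin d → ℕ) → ℝ :=
  fun α => Real.sqrt (w α) * x α / mfact α

lemma psiH_add (w : (Fin d → ℕ) → ℝ) (x y : (Fin d → ℕ) → ℝ) :
    psiH w (x + y) = psiH w x + psiH w y := by
  funext α; simp only [psiH, Pi.add_apply]; ring

lemma psiH_smul (w : (Fin d → ℕ) → ℝ) (a : ℝ) (x : (Fin d → ℕ) → ℝ) :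
    psiH w (a • x) = a • psiH w x := by
  funext α; simp only [psiH, Pi.smul_apply, smul_eq_mul]; ring

lemma memH_psiH {w : (Fin d → ℕ) → ℝ} (hw : ∀ α, 0 ≤ w α) (x : lpH d) :
    memH w (psiH w x) := by
  constructor
  · intro α h; simp [psiH, h]
  · refine Summable.of_nonneg_of_le (fun α => ?_) (fun α => ?_) (summable_sq x)
    · rcases eq_or_lt_of_le (hw α) with h | h
      · simp [← h]
      · positivity
    · rcases eq_or_lt_of_le (hw α) with h | h
      · simp only [← h]
        simp
        positivity
      · have hm := mfact_pos α
        rw [show mfact α ^ 2 * psiH w x α ^ 2 / w α = (x α)^2 by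
          simp only [psiH]
          rw [div_pow, mul_pow, Real.sq_sqrt h.le]
          field_simp]

lemma psiH_phiH {w : (Fin d → ℕ) → ℝ} (hw : ∀ α, 0 ≤ w α) {c : (Fin d → ℕ) → ℝ}
    (hc : memH w c) : psiH w (phiH w c) = c := by
  funext α
  rcases eq_or_lt_of_le (hw α) with h | h
  · simp [psiH, ← h, hc.1 α h.symm]
  · have hm := (mfact_pos α).ne'
    have hs := (Real.sqrt_pos.2 h).ne'
    simp only [psiH, phiH]
    field_simp

lemma phiH_psiH_sq_le {w : (Fin d → ℕ) → ℝ} (hw : ∀ α, 0 ≤ w α) (x : lpH d)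
    (α : Fin d → ℕ) : (phiH w (psiH w x) α)^2 ≤ (x α)^2 := by
  rcases eq_or_lt_of_le (hw α) with h | h
  · simp [phiH, psiH, ← h]
    positivity
  · have hm := (mfact_pos α).ne'
    have hs := (Real.sqrt_pos.2 h).ne'
    have : phiH w (psiH w x) α = x α := by
      simp only [phiH, psiH]
      field_simp
    rw [this]

lemma A_zero {w : (Fin d → ℕ) → ℝ} {A : ((Fin d → ℕ) → ℝ) → ((Fin d → ℕ) → ℝ)}
    (hA : IsBoundedOpH w A) : A 0 = 0 := by
  have h := hA.2.1 1 0 0 (memH_zero w) (memH_zero w)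
  simp only [one_smul, add_zero] at h
  have h3 : A 0 + 0 = A 0 + A 0 := by rw [add_zero]; exact h
  exact (add_left_cancel h3).symm

lemma A_add {w : (Fin d → ℕ) → ℝ} {A : ((Fin d → ℕ) → ℝ) → ((Fin d → ℕ) → ℝ)}
    (hA : IsBoundedOpH w A) {u v : (Fin d → ℕ) → ℝ} (hu : memH w u) (hv : memH w v) :
    A (u + v) = A u + A v := by
  have h := hA.2.1 1 u v hu hv
  simpa using h

lemma A_smul {w : (Fin d → ℕ) → ℝ} {A : ((Fin d → ℕ) → ℝ) → ((Fin d → ℕ) → ℝ)}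
    (hA : IsBoundedOpH w A) (a : ℝ) {u : (Fin d → ℕ) → ℝ} (hu : memH w u) :
    A (a • u) = a • A u := by
  have h := hA.2.1 a u 0 hu (memH_zero w)
  simpa [A_zero hA] using h

end OpAux

section AhatAux

open Finset
open scoped ENNReal

variable {d : ℕ}

lemma toLpH_add (w : (Fin d → ℕ) → ℝ) (hw : ∀ α, 0 ≤ w α) {u v : (Fin d → ℕ) → ℝ}
    (hu : memH w u) (hv : memH w v) (huv : memH w (u + v)) :
    toLpH w hw huv = toLpH w hw hu + toLpH w hw hv := by
  apply lp.ext
  rw [lp.coeFn_add]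
  funext α
  simp only [toLpH_apply, Pi.add_apply, phiH]
  ring

lemma toLpH_smul (w : (Fin d → ℕ) → ℝ) (hw : ∀ α, 0 ≤ w α) (a : ℝ) {u : (Fin d → ℕ) → ℝ}
    (hu : memH w u) (hau : memH w (a • u)) :
    toLpH w hw hau = a • toLpH w hw hu := by
  apply lp.ext
  rw [lp.coeFn_smul]
  funext α
  simp only [toLpH_apply, Pi.smul_apply, smul_eq_mul, phiH]
  ring

lemma memH_add {w : (Fin d → ℕ) → ℝ} (hw : ∀ α, 0 ≤ w α) {u v : (Fin d → ℕ) → ℝ}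
    (hu : memH w u) (hv : memH w v) : memH w (u + v) := by
  have h1 : Memℓp (phiH w u + phiH w v) 2 := (memℓp_phiH hw hu).add (memℓp_phiH hw hv)
  constructor
  · intro α h; rw [Pi.add_apply, hu.1 α h, hv.1 α h, add_zero]
  · have h2 : phiH w (u + v) = phiH w u + phiH w v := by
      funext α; simp only [phiH, Pi.add_apply]; ring
    have h3 : Memℓp (phiH w (u + v)) 2 := by rw [h2]; exact h1
    have := h3.summable (p := 2) (by norm_num)
    have he : (fun α : Fin d → ℕ => ‖phiH w (u+v) α‖ ^ (2:ℝ≥0∞).toReal)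
        = fun α : Fin d → ℕ => mfact α ^ 2 * (u+v) α ^ 2 / w α := by
      funext α
      rw [show ((2:ℝ≥0∞)).toReal = ((2:ℕ):ℝ) by norm_num, Real.rpow_natCast,
        Real.norm_eq_abs, sq_abs, phiH_sq w hw]
    rwa [he] at this

lemma memH_smul {w : (Fin d → ℕ) → ℝ} (hw : ∀ α, 0 ≤ w α) (a : ℝ) {u : (Fin d → ℕ) → ℝ}
    (hu : memH w u) : memH w (a • u) := by
  refine memH_of_bound hw hu |a| (fun α h => by rw [Pi.smul_apply, hu.1 α h, smul_zero])
    (fun α => ?_)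
  rw [Pi.smul_apply, smul_eq_mul, abs_mul]

/-- The operator `A` transported to `ℓ²` as a linear map. -/
def AhatLin (w : (Fin d → ℕ) → ℝ) (hw : ∀ α, 0 ≤ w α)
    (A : ((Fin d → ℕ) → ℝ) → ((Fin d → ℕ) → ℝ)) (hA : IsBoundedOpH w A) :
    lpH d →ₗ[ℝ] lpH d where
  toFun x := toLpH w hw (hA.1 _ (memH_psiH hw x))
  map_add' x y := by
    have h1 : psiH w (⇑(x + y)) = psiH w x + psiH w y := by
      rw [lp.coeFn_add, psiH_add]
    have h2 : A (psiH w (⇑(x+y))) = A (psiH w x) + A (psiH w y) := by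
      rw [h1, A_add hA (memH_psiH hw x) (memH_psiH hw y)]
    have hmem : memH w (A (psiH w x) + A (psiH w y)) :=
      memH_add hw (hA.1 _ (memH_psiH hw x)) (hA.1 _ (memH_psiH hw y))
    exact (toLpH_congr w hw _ hmem h2).trans
      (toLpH_add w hw (hA.1 _ (memH_psiH hw x)) (hA.1 _ (memH_psiH hw y)) hmem)
  map_smul' a x := by
    have h1 : psiH w (⇑(a • x)) = a • psiH w x := by
      rw [lp.coeFn_smul, psiH_smul]
    have h2 : A (psiH w (⇑(a • x))) = a • A (psiH w x) := by
      rw [h1, A_smul hA a (memH_psiH hw x)]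
    have hmem : memH w (a • A (psiH w x)) :=
      memH_smul hw a (hA.1 _ (memH_psiH hw x))
    simp only [RingHom.id_apply]
    exact (toLpH_congr w hw _ hmem h2).trans
      (toLpH_smul w hw a (hA.1 _ (memH_psiH hw x)) hmem)

end AhatAux

section Aux5

open Finset
open scoped ENNReal

variable {d : ℕ}

lemma AhatLin_bound (w : (Fin d → ℕ) → ℝ) (hw : ∀ α, 0 ≤ w α)
    (A : ((Fin d → ℕ) → ℝ) → ((Fin d → ℕ) → ℝ)) (hA : IsBoundedOpH w A)
    {M : ℝ} (hM0 : 0 ≤ M) (hM : ∀ c, memH w c → normH w (A c) ≤ M * normH w c)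
    (x : lpH d) : ‖AhatLin w hw A hA x‖ ≤ M * ‖x‖ := by
  have h1 : ‖AhatLin w hw A hA x‖ = normH w (A (psiH w x)) :=
    (normH_eq w hw (hA.1 _ (memH_psiH hw x))).symm
  rw [h1]
  refine (hM _ (memH_psiH hw x)).trans ?_
  refine mul_le_mul_of_nonneg_left ?_ hM0
  rw [normH_eq w hw (memH_psiH hw x)]
  exact norm_lpH_le _ x (fun α => phiH_psiH_sq_le hw x α)

/-- The operator `A` transported to `ℓ²` as a continuous linear map. -/
def AhatCLM (w : (Fin d → ℕ) → ℝ) (hw : ∀ α, 0 ≤ w α)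
    (A : ((Fin d → ℕ) → ℝ) → ((Fin d → ℕ) → ℝ)) (hA : IsBoundedOpH w A) :
    lpH d →L[ℝ] lpH d :=
  LinearMap.mkContinuous (AhatLin w hw A hA) hA.2.2.choose
    (fun x => AhatLin_bound w hw A hA hA.2.2.choose_spec.1 hA.2.2.choose_spec.2 x)

lemma AhatCLM_toLpH (w : (Fin d → ℕ) → ℝ) (hw : ∀ α, 0 ≤ w α)
    (A : ((Fin d → ℕ) → ℝ) → ((Fin d → ℕ) → ℝ)) (hA : IsBoundedOpH w A)
    {c : (Fin d → ℕ) → ℝ} (hc : memH w c) :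
    AhatCLM w hw A hA (toLpH w hw hc) = toLpH w hw (hA.1 c hc) := by
  have h1 : psiH w (⇑(toLpH w hw hc)) = c := psiH_phiH hw hc
  have h2 : A (psiH w (⇑(toLpH w hw hc))) = A c := by rw [h1]
  show toLpH w hw (hA.1 _ (memH_psiH hw (toLpH w hw hc))) = toLpH w hw (hA.1 c hc)
  exact toLpH_congr w hw (hA.1 _ (memH_psiH hw (toLpH w hw hc))) (hA.1 c hc) h2

lemma memH_Sscale {w : (Fin d → ℕ) → ℝ} (hw : ∀ α, 0 ≤ w α) {c : (Fin d → ℕ) → ℝ}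
    (hc : memH w c) {ξ' : Fin d → ℝ} (hξ' : ∀ j, |ξ' j| ≤ 1) :
    memH w (Sscale ξ' c) := by
  refine memH_of_bound hw hc 1
    (fun α h => by rw [Sscale, hc.1 α h, mul_zero]) (fun α => ?_)
  rw [Sscale, abs_mul]
  refine mul_le_mul_of_nonneg_right ?_ (abs_nonneg _)
  rw [Finset.abs_prod]
  refine Finset.prod_le_one (fun j _ => abs_nonneg _) (fun j _ => ?_)
  rw [abs_pow]
  exact pow_le_one₀ (abs_nonneg _) (hξ' j)

lemma memH_Dscale {w : (Fin d → ℕ) → ℝ} (hw : ∀ α, 0 ≤ w α) {c : (Fin d → ℕ) → ℝ}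
    (hc : memH w c) {ξ : Fin d → ℝ} (hξ : ∀ j, ξ j ∈ Set.Ioo (0:ℝ) 1) (i : Fin d) :
    memH w (Dscale i ξ c) := by
  refine memH_of_bound hw hc (1 - ξ i)⁻¹
    (fun α h => by rw [Dscale, hc.1 α h, mul_zero]) (fun α => ?_)
  rw [Dscale, abs_mul, abs_mul, abs_mul]
  refine mul_le_mul_of_nonneg_right ?_ (abs_nonneg _)
  have h1 : |∏ j ∈ Finset.univ.erase i, ξ j ^ α j| ≤ 1 := by
    rw [Finset.abs_prod]
    refine Finset.prod_le_one (fun j _ => abs_nonneg _) (fun j _ => ?_)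
    rw [abs_pow]
    refine pow_le_one₀ (abs_nonneg _) ?_
    rw [abs_of_nonneg (hξ j).1.le]
    exact (hξ j).2.le
  have h2 : |((α i : ℕ) : ℝ)| * |ξ i ^ (α i - 1)| = ((α i : ℕ) : ℝ) * ξ i ^ (α i - 1) := by
    rw [abs_of_nonneg (Nat.cast_nonneg _), abs_of_nonneg (pow_nonneg (hξ i).1.le _)]
  calc |((α i : ℕ) : ℝ)| * |ξ i ^ (α i - 1)| * |∏ j ∈ Finset.univ.erase i, ξ j ^ α j|
      ≤ |((α i : ℕ) : ℝ)| * |ξ i ^ (α i - 1)| * 1 :=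
        mul_le_mul_of_nonneg_left h1 (by positivity)
    _ = ((α i : ℕ) : ℝ) * ξ i ^ (α i - 1) := by rw [mul_one, h2]
    _ ≤ (1 - ξ i)⁻¹ := pow_bound1 (hξ i).1.le (hξ i).2 (α i)

end Aux5

/-- Equation (8): derivative of the quadratic loss in the garrote parameter. For a
bounded linear operator `A` on `H`, `g ∈ H`, `c ∈ H`, `ξ ∈ (0,1)^d` and a coordinate
`i`, the function `t ↦ ½⟨S_{ξ[i↦t]} c, A(S_{ξ[i↦t]} c)⟩ − ⟨g, S_{ξ[i↦t]} c⟩` on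
`(0,1)` is differentiable at `t = ξ i` with derivative
`½⟨D_i(ξ)c, A(S_ξ c)⟩ + ½⟨S_ξ c, A(D_i(ξ)c)⟩ − ⟨g, D_i(ξ)c⟩`. -/
theorem quadratic_loss_garrote_derivative
    (d : ℕ) (hd : 1 ≤ d)
    (w : (Fin d → ℕ) → ℝ) (hw : ∀ α, 0 ≤ w α)
    (hwsum : Summable fun α : Fin d → ℕ => w α / mfact α ^ 2)
    (A : ((Fin d → ℕ) → ℝ) → ((Fin d → ℕ) → ℝ)) (hA : IsBoundedOpH w A)
    (g : (Fin d → ℕ) → ℝ) (hg : memH w g)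
    (c : (Fin d → ℕ) → ℝ) (hc : memH w c)
    (ξ : Fin d → ℝ) (hξ : ∀ j, ξ j ∈ Set.Ioo (0:ℝ) 1) (i : Fin d) :
    HasDerivWithinAt
      (fun t : ℝ => quadLoss w A g (Function.update ξ i t) c)
      (quadLossDeriv w A g i ξ c)
      (Set.Ioo (0:ℝ) 1) (ξ i) := by
  classical
  open scoped RealInnerProductSpace in
  obtain ⟨hs0, hs1⟩ := hξ i
  -- membership of scaled sequences
  have hupd_mem : ∀ t : ℝ, 0 ≤ t → t ≤ 1 → ∀ j, |Function.update ξ i t j| ≤ 1 := by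
    intro t ht0 ht1 j
    rcases eq_or_ne j i with rfl | hji
    · rw [Function.update_self, abs_of_nonneg ht0]; exact ht1
    · rw [Function.update_of_ne hji, abs_of_nonneg (hξ j).1.le]; exact (hξ j).2.le
  have hSmem : ∀ t : ℝ, 0 ≤ t → t ≤ 1 → memH w (Sscale (Function.update ξ i t) c) :=
    fun t ht0 ht1 => memH_Sscale hw hc (hupd_mem t ht0 ht1)
  have hD : memH w (Dscale i ξ c) := memH_Dscale hw hc hξ i
  -- the curve in ℓ²
  set F : ℝ → lpH d := fun t =>
    if h : memH w (Sscale (Function.update ξ i t) c) then toLpH w hw h else 0 with hFdef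
  have F_eq : ∀ {t : ℝ} (h : memH w (Sscale (Function.update ξ i t) c)),
      F t = toLpH w hw h := by
    intro t h; rw [hFdef]; exact dif_pos h
  set v : lpH d := toLpH w hw hD with hvdef
  -- coordinates
  have hSco : ∀ (t : ℝ) (α : Fin d → ℕ), Sscale (Function.update ξ i t) c α
      = t ^ (α i) * ((∏ j ∈ Finset.univ.erase i, ξ j ^ α j) * c α) := by
    intro t α
    have hfun : ∀ j, Function.update ξ i t j ^ α j
        = Function.update (fun j => ξ j ^ α j) i (t ^ α i) j := by
      intro j; rcases eq_or_ne j i with rfl | hji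
      · simp
      · rw [Function.update_of_ne hji, Function.update_of_ne hji]
    have h2 : (∏ j, Function.update ξ i t j ^ α j)
        = t ^ α i * ∏ j ∈ Finset.univ.erase i, ξ j ^ α j := by
      rw [Finset.prod_congr rfl (fun j _ => hfun j),
        Finset.prod_update_of_mem (Finset.mem_univ i), ← Finset.erase_eq]
    show (∏ j, Function.update ξ i t j ^ α j) * c α = _
    rw [h2]; ring
  -- the comparison element of ℓ²
  have hPc : memH w (fun α => (∏ j ∈ Finset.univ.erase i, ξ j ^ α j) * c α) := by
    refine memH_of_bound hw hc 1 (fun α h => by rw [hc.1 α h, mul_zero]) (fun α => ?_)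
    show |(∏ j ∈ Finset.univ.erase i, ξ j ^ α j) * c α| ≤ 1 * |c α|
    rw [abs_mul]
    refine mul_le_mul_of_nonneg_right ?_ (abs_nonneg _)
    rw [Finset.abs_prod]
    refine Finset.prod_le_one (fun j _ => abs_nonneg _) (fun j _ => ?_)
    rw [abs_pow]
    refine pow_le_one₀ (abs_nonneg _) ?_
    rw [abs_of_nonneg (hξ j).1.le]; exact (hξ j).2.le
  set Q : lpH d := toLpH w hw hPc with hQdef
  have hQco : ∀ α, (Q : (Fin d → ℕ) → ℝ) α
      = mfact α * ((∏ j ∈ Finset.univ.erase i, ξ j ^ α j) * c α) / Real.sqrt (w α) := fun α => rfl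
  have hFco : ∀ (t : ℝ) (h : memH w (Sscale (Function.update ξ i t) c)) (α : Fin d → ℕ),
      (F t : (Fin d → ℕ) → ℝ) α = t ^ (α i) * (Q : (Fin d → ℕ) → ℝ) α := by
    intro t h α
    rw [F_eq h, toLpH_apply, hQco]
    simp only [phiH]
    rw [hSco t α]
    ring
  have hvco : ∀ α : Fin d → ℕ, (v : (Fin d → ℕ) → ℝ) α
      = ((α i : ℕ) : ℝ) * (ξ i) ^ (α i - 1) * (Q : (Fin d → ℕ) → ℝ) α := by
    intro α
    rw [hvdef, toLpH_apply, hQco]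
    simp only [phiH, Dscale]
    ring
  -- derivative of the curve
  have hF : HasDerivWithinAt F v (Set.Ioo (0:ℝ) 1) (ξ i) := by
    rw [hasDerivWithinAt_iff_isLittleO]
    set ρ : ℝ := (ξ i + 1)/2 with hρdef
    have hρ0 : (0:ℝ) < ρ := by rw [hρdef]; linarith
    have hρ1 : ρ < 1 := by rw [hρdef]; linarith
    have hsρ : ξ i ≤ ρ := by rw [hρdef]; linarith
    have hev : ∀ᶠ t in 𝓝[Set.Ioo (0:ℝ) 1] (ξ i), t ∈ Set.Ioo (0:ℝ) 1 ∧ t < ρ := by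
      filter_upwards [self_mem_nhdsWithin,
        (eventually_lt_nhds (show ξ i < ρ by rw [hρdef]; linarith)).filter_mono
          nhdsWithin_le_nhds] with t h1 h2
      exact ⟨h1, h2⟩
    have hbig : (fun t => F t - F (ξ i) - (t - ξ i) • v)
        =O[𝓝[Set.Ioo (0:ℝ) 1] (ξ i)] (fun t => (t - ξ i)^2) := by
      rw [Asymptotics.isBigO_iff]
      refine ⟨C2 ρ * ‖Q‖, ?_⟩
      filter_upwards [hev] with t ht
      obtain ⟨htI, htρ⟩ := ht
      have hmt : memH w (Sscale (Function.update ξ i t) c) := hSmem t htI.1.le htI.2.le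
      have hms : memH w (Sscale (Function.update ξ i (ξ i)) c) := hSmem (ξ i) hs0.le hs1.le
      set B : ℝ := (t - ξ i)^2 * C2 ρ with hBdef
      have hB0 : 0 ≤ B := mul_nonneg (sq_nonneg _) (C2_nonneg ρ)
      have hsq : ∀ α, ((F t - F (ξ i) - (t - ξ i) • v : lpH d) α)^2 ≤ ((B • Q : lpH d) α)^2 := by
        intro α
        have hco : (F t - F (ξ i) - (t - ξ i) • v : lpH d) α
            = (t ^ (α i) - (ξ i) ^ (α i)
                - (t - ξ i) * (((α i : ℕ) : ℝ) * (ξ i) ^ (α i - 1))) * (Q : (Fin d → ℕ) → ℝ) α := by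
          rw [lp.coeFn_sub, lp.coeFn_sub, Pi.sub_apply, Pi.sub_apply, lp.coeFn_smul,
            Pi.smul_apply, smul_eq_mul, hFco t hmt α, hFco (ξ i) hms α, hvco α]
          ring
        have hBQ : (B • Q : lpH d) α = B * (Q : (Fin d → ℕ) → ℝ) α := by
          rw [lp.coeFn_smul, Pi.smul_apply, smul_eq_mul]
        rw [hco, hBQ, mul_pow, mul_pow]
        refine mul_le_mul_of_nonneg_right ?_ (sq_nonneg _)
        rw [← sq_abs (t ^ (α i) - _ - _)]
        refine pow_le_pow_left₀ (abs_nonneg _) ?_ 2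
        exact key_poly_bound hρ0 hρ1 htI.1.le htρ.le hs0.le hsρ (α i)
      calc ‖F t - F (ξ i) - (t - ξ i) • v‖ ≤ ‖(B • Q : lpH d)‖ := norm_lpH_le _ _ hsq
        _ = |B| * ‖Q‖ := by rw [norm_smul, Real.norm_eq_abs]
        _ = C2 ρ * ‖Q‖ * ‖(t - ξ i)^2‖ := by
            rw [abs_of_nonneg hB0, hBdef, Real.norm_eq_abs,
              abs_of_nonneg (sq_nonneg (t - ξ i))]
            ring
    have ht0 : Filter.Tendsto (fun t : ℝ => t - ξ i)
        (𝓝[Set.Ioo (0:ℝ) 1] (ξ i)) (𝓝 0) := by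
      have hcont : Continuous (fun t : ℝ => t - ξ i) := continuous_id.sub continuous_const
      have h2 := hcont.tendsto (ξ i)
      rw [sub_self] at h2
      exact h2.mono_left nhdsWithin_le_nhds
    have h1 : (fun t : ℝ => t - ξ i) =o[𝓝[Set.Ioo (0:ℝ) 1] (ξ i)] (fun _ => (1:ℝ)) :=
      (Asymptotics.isLittleO_one_iff ℝ).2 ht0
    have h2 := h1.mul_isBigO (Asymptotics.isBigO_refl (fun t : ℝ => t - ξ i)
      (𝓝[Set.Ioo (0:ℝ) 1] (ξ i)))
    have hlit : (fun t : ℝ => (t - ξ i)^2)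
        =o[𝓝[Set.Ioo (0:ℝ) 1] (ξ i)] (fun t => t - ξ i) := by
      simpa [pow_two] using h2
    exact hbig.trans_isLittleO hlit
  -- transfer to the scalar function
  have hSξ : memH w (Sscale ξ c) := by
    refine memH_Sscale hw hc (fun j => ?_)
    rw [abs_of_nonneg (hξ j).1.le]; exact (hξ j).2.le
  have hupds : Function.update ξ i (ξ i) = ξ := Function.update_eq_self i ξ
  have hFs : F (ξ i) = toLpH w hw hSξ := by
    have hms : memH w (Sscale (Function.update ξ i (ξ i)) c) := hSmem (ξ i) hs0.le hs1.le
    rw [F_eq hms]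
    exact toLpH_congr w hw hms hSξ (by rw [hupds])
  set Ahat : lpH d →L[ℝ] lpH d := AhatCLM w hw A hA with hAhatdef
  have hFA : HasDerivWithinAt (fun t => Ahat (F t)) (Ahat v) (Set.Ioo (0:ℝ) 1) (ξ i) := by
    have := HasFDerivAt.comp_hasDerivWithinAt (ξ i) (Ahat.hasFDerivAt (x := F (ξ i))) hF
    simpa [Function.comp_def] using this
  have hQder : HasDerivWithinAt (fun t => ⟪F t, Ahat (F t)⟫)
      (⟪F (ξ i), Ahat v⟫ + ⟪v, Ahat (F (ξ i))⟫) (Set.Ioo (0:ℝ) 1) (ξ i) :=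
    HasDerivWithinAt.inner ℝ hF hFA
  have hGder : HasDerivWithinAt (fun t => ⟪toLpH w hw hg, F t⟫)
      (⟪toLpH w hw hg, v⟫ + ⟪(0 : lpH d), F (ξ i)⟫) (Set.Ioo (0:ℝ) 1) (ξ i) :=
    HasDerivWithinAt.inner ℝ (hasDerivWithinAt_const _ _ _) hF
  have hmain := (hQder.const_mul ((1:ℝ)/2)).sub hGder
  have hAv : Ahat v = toLpH w hw (hA.1 _ hD) := AhatCLM_toLpH w hw A hA hD
  have hAFs : Ahat (F (ξ i)) = toLpH w hw (hA.1 _ hSξ) := by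
    rw [hFs]; exact AhatCLM_toLpH w hw A hA hSξ
  have hval : quadLossDeriv w A g i ξ c
      = 1/2 * (⟪F (ξ i), Ahat v⟫ + ⟪v, Ahat (F (ξ i))⟫)
        - (⟪toLpH w hw hg, v⟫ + ⟪(0 : lpH d), F (ξ i)⟫) := by
    rw [hAv, hAFs, hFs, inner_zero_left, hvdef]
    unfold quadLossDeriv
    rw [innerH_eq w hw hD (hA.1 _ hSξ), innerH_eq w hw hSξ (hA.1 _ hD),
      innerH_eq w hw hg hD]
    ring
  rw [hval]
  refine hmain.congr ?_ ?_
  · intro t htI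
    have hmt : memH w (Sscale (Function.update ξ i t) c) := hSmem t htI.1.le htI.2.le
    unfold quadLoss
    simp only [Pi.sub_apply]
    rw [F_eq hmt]
    have hAF : Ahat (toLpH w hw hmt) = toLpH w hw (hA.1 _ hmt) := AhatCLM_toLpH w hw A hA hmt
    rw [hAF, innerH_eq w hw hmt (hA.1 _ hmt), innerH_eq w hw hg hmt]
  · have hmt : memH w (Sscale (Function.update ξ i (ξ i)) c) := hSmem (ξ i) hs0.le hs1.le
    unfold quadLoss
    simp only [Pi.sub_apply]
    rw [F_eq hmt]
    have hAF : Ahat (toLpH w hw hmt) = toLpH w hw (hA.1 _ hmt) := AhatCLM_toLpH w hw A hA hmt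
    rw [hAF, innerH_eq w hw hmt (hA.1 _ hmt), innerH_eq w hw hg hmt]
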